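/- Let n ≥ 1 and s ≥ 1 be natural numbers, let R and Σ be symmetric positive definite s×s real matrices, let E be the real matrix of size (Fin n × Fin s) × Fin s defined by E((i,j), k) = 1 if j = k and 0 otherwise, and set W = J_n ⊗ R + I_n ⊗ Σ. Then W · ( I_n ⊗ Σ⁻¹ − E · Σ⁻¹ · (R⁻¹ + n·Σ⁻¹)⁻¹ · Σ⁻¹ · Eᵀ ) equals the identity matrix indexed by Fin n × Fin s; in particular W is invertible with W⁻¹ = I_n ⊗ Σ⁻¹ − E · Σ⁻¹ · (R⁻¹ + n·Σ⁻¹)⁻¹ · Σ⁻¹ · Eᵀ. -/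

import Mathlib

open Matrix
open scoped Kronecker

private lemma smul_posDef {s : ℕ} {A : Matrix (Fin s) (Fin s) ℝ} {c : ℝ} (hc : 0 < c)
    (hA : A.PosDef) : (c • A).PosDef := by
  refine ⟨?_, fun x hx => ?_⟩
  · unfold Matrix.IsHermitian
    rw [conjTranspose_smul, hA.1]
    simp
  · have := hA.2 hx
    have h : (x.sum fun i xi => x.sum fun j xj => star xi * (c • A) i j * xj)
        = c * (x.sum fun i xi => x.sum fun j xj => star xi * A i j * xj) := by
      simp only [Finsupp.sum, Finset.mul_sum, Matrix.smul_apply, smul_eq_mul]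
      exact Finset.sum_congr rfl fun _ _ => Finset.sum_congr rfl fun _ _ => by ring
    rw [h]
    exact mul_pos hc this

theorem stmt6 (n s : ℕ) (hn : 1 ≤ n) (hs : 1 ≤ s)
    (R Sig : Matrix (Fin s) (Fin s) ℝ) (hR : R.PosDef) (hSig : Sig.PosDef) :
    let E : Matrix (Fin n × Fin s) (Fin s) ℝ :=
      Matrix.of fun p k => if p.2 = k then 1 else 0
    let W : Matrix (Fin n × Fin s) (Fin n × Fin s) ℝ :=
      (Matrix.of fun _ _ => (1 : ℝ) : Matrix (Fin n) (Fin n) ℝ) ⊗ₖ R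
        + (1 : Matrix (Fin n) (Fin n) ℝ) ⊗ₖ Sig
    let Winv : Matrix (Fin n × Fin s) (Fin n × Fin s) ℝ :=
      (1 : Matrix (Fin n) (Fin n) ℝ) ⊗ₖ Sig⁻¹
        - E * Sig⁻¹ * (R⁻¹ + (n : ℝ) • Sig⁻¹)⁻¹ * Sig⁻¹ * Eᵀ
    W * Winv = 1 ∧ IsUnit W.det ∧ W⁻¹ = Winv := by
  intro E W Winv
  set J : Matrix (Fin n) (Fin n) ℝ := Matrix.of fun _ _ => (1 : ℝ) with hJ
  set M : Matrix (Fin s) (Fin s) ℝ := R⁻¹ + (n : ℝ) • Sig⁻¹ with hMdef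
  have hnpos : (0 : ℝ) < (n : ℝ) := by exact_mod_cast hn
  have hM : M.PosDef := hR.inv.add (smul_posDef hnpos hSig.inv)
  have hRd : IsUnit R.det := isUnit_iff_ne_zero.mpr hR.det_pos.ne'
  have hSd : IsUnit Sig.det := isUnit_iff_ne_zero.mpr hSig.det_pos.ne'
  have hMd : IsUnit M.det := isUnit_iff_ne_zero.mpr hM.det_pos.ne'
  have hRR : R * R⁻¹ = 1 := mul_nonsing_inv _ hRd
  have hSS : Sig * Sig⁻¹ = 1 := mul_nonsing_inv _ hSd
  have hMM : M * M⁻¹ = 1 := mul_nonsing_inv _ hMd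
  set B : Matrix (Fin s) (Fin s) ℝ := Sig⁻¹ * M⁻¹ * Sig⁻¹ with hBdef
  -- E * X * Eᵀ is the Kronecker product J ⊗ X
  have hE : E * Sig⁻¹ * M⁻¹ * Sig⁻¹ * Eᵀ = J ⊗ₖ B := by
    ext ⟨i, j⟩ ⟨i', j'⟩
    simp [E, B, J, Matrix.mul_apply, Finset.sum_mul, Finset.mul_sum, ite_mul, mul_ite,
      Matrix.transpose_apply]
  -- the key scalar-level matrix identity
  have hRM : R * M = 1 + (n : ℝ) • (R * Sig⁻¹) := by
    rw [hMdef, Matrix.mul_add, hRR, Matrix.mul_smul]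
  have hSB : Sig * B = M⁻¹ * Sig⁻¹ := by
    rw [hBdef, ← Matrix.mul_assoc, ← Matrix.mul_assoc, hSS, Matrix.one_mul]
  have hRB : R * B = R * Sig⁻¹ * M⁻¹ * Sig⁻¹ := by
    rw [hBdef]; noncomm_ring
  have hid : (n : ℝ) • (R * B) + Sig * B = R * Sig⁻¹ := by
    have : (1 + (n : ℝ) • (R * Sig⁻¹)) * (M⁻¹ * Sig⁻¹) = R * Sig⁻¹ := by
      rw [← hRM, Matrix.mul_assoc R M _, ← Matrix.mul_assoc M M⁻¹ _, hMM, Matrix.one_mul]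
    calc (n : ℝ) • (R * B) + Sig * B
        = (1 + (n : ℝ) • (R * Sig⁻¹)) * (M⁻¹ * Sig⁻¹) := by
          rw [hRB, hSB, Matrix.add_mul, Matrix.one_mul, Matrix.smul_mul]
          rw [add_comm]
          congr 1
          noncomm_ring
      _ = R * Sig⁻¹ := this
  have hJJ : J * J = (n : ℝ) • J := by
    ext i k
    simp [J, Matrix.mul_apply]
  have key : W * Winv = 1 := by
    show (J ⊗ₖ R + (1 : Matrix (Fin n) (Fin n) ℝ) ⊗ₖ Sig) *
      ((1 : Matrix (Fin n) (Fin n) ℝ) ⊗ₖ Sig⁻¹ - E * Sig⁻¹ * M⁻¹ * Sig⁻¹ * Eᵀ) = 1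
    rw [hE, Matrix.mul_sub, Matrix.add_mul, Matrix.add_mul, ← mul_kronecker_mul,
      ← mul_kronecker_mul, ← mul_kronecker_mul, ← mul_kronecker_mul,
      Matrix.mul_one, Matrix.one_mul, Matrix.one_mul, hSS, hJJ, Matrix.smul_kronecker,
      ← Matrix.kronecker_smul]
    rw [← kronecker_add J ((n : ℝ) • (R * B)) (Sig * B), hid]
    simp [one_kronecker_one]
  refine ⟨key, ?_, ?_⟩
  · exact Matrix.isUnit_det_of_right_inverse key
  · exact inv_eq_right_inv key
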